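/- Over a finite field F_q of characteristic 2 with q ≥ 4, the Noether number β_{mV}(O_2^+(F_q)) — the minimal degree d such that the vector invariant ring F_q[mV]^{O_2^+(F_q)} is generated by invariants of degree at most d — equals max{q-1, m} for every positive integer m. -/

import Mathlib

open MvPolynomial
set_option linter.unusedSectionVars false
set_option maxHeartbeats 1000000
namespace NN
variable {F : Type*} [Field F] [Fintype F] [DecidableEq F] {m : ℕ}

abbrev R (F : Type*) [Field F] (m : ℕ) := MvPolynomial (Fin m ⊕ Fin m) F

noncomputable def sA (F : Type*) [Field F] (m : ℕ) : R F m →ₐ[F] R F m :=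
  aeval (R := F) (Sum.elim
    (fun i : Fin m => (X (Sum.inr i) : MvPolynomial (Fin m ⊕ Fin m) F))
    (fun i : Fin m => X (Sum.inl i)))

noncomputable def tA (F : Type*) [Field F] (m : ℕ) (a : Fˣ) : R F m →ₐ[F] R F m :=
  aeval (R := F) (Sum.elim
    (fun i : Fin m => C ((a : F)⁻¹) * X (Sum.inl i))
    (fun i : Fin m => C ((a : F)) * (X (Sum.inr i) : MvPolynomial (Fin m ⊕ Fin m) F)))

def Inv (f : R F m) : Prop := sA F m f = f ∧ ∀ a : Fˣ, tA F m a f = f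

lemma inv_one : Inv (1 : R F m) := ⟨map_one _, fun _ => map_one _⟩

lemma inv_add {f g : R F m} (hf : Inv f) (hg : Inv g) : Inv (f + g) :=
  ⟨by rw [map_add, hf.1, hg.1], fun a => by rw [map_add, hf.2 a, hg.2 a]⟩

lemma inv_mul {f g : R F m} (hf : Inv f) (hg : Inv g) : Inv (f * g) :=
  ⟨by rw [map_mul, hf.1, hg.1], fun a => by rw [map_mul, hf.2 a, hg.2 a]⟩

lemma inv_C_mul {f : R F m} (c : F) (hf : Inv f) : Inv (C c * f) := by
  refine ⟨?_, fun a => ?_⟩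
  · rw [map_mul, hf.1]; congr 1; exact (sA F m).commutes c
  · rw [map_mul, hf.2 a]; congr 1; exact (tA F m a).commutes c

def swapD {m : ℕ} (d : (Fin m ⊕ Fin m) →₀ ℕ) : (Fin m ⊕ Fin m) →₀ ℕ :=
  Finsupp.equivMapDomain (Equiv.sumComm (Fin m) (Fin m)) d

@[simp] lemma swapD_apply_inl (d : (Fin m ⊕ Fin m) →₀ ℕ) (i : Fin m) :
    swapD d (Sum.inl i) = d (Sum.inr i) := rfl

@[simp] lemma swapD_apply_inr (d : (Fin m ⊕ Fin m) →₀ ℕ) (i : Fin m) :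
    swapD d (Sum.inr i) = d (Sum.inl i) := rfl

@[simp] lemma swapD_swapD (d : (Fin m ⊕ Fin m) →₀ ℕ) : swapD (swapD d) = d := by
  ext s; cases s <;> rfl

@[simp] lemma swapD_add (d e : (Fin m ⊕ Fin m) →₀ ℕ) :
    swapD (d + e) = swapD d + swapD e := by
  ext s; cases s <;> simp [swapD]

@[simp] lemma swapD_zero : swapD (0 : (Fin m ⊕ Fin m) →₀ ℕ) = 0 := by
  ext s; cases s <;> rfl

lemma swapD_eq_zero_iff {d : (Fin m ⊕ Fin m) →₀ ℕ} : swapD d = 0 ↔ d = 0 := by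
  constructor
  · intro h; rw [← swapD_swapD d, h, swapD_zero]
  · intro h; rw [h, swapD_zero]

lemma swapD_eq_mapDomain (d : (Fin m ⊕ Fin m) →₀ ℕ) :
    swapD d = Finsupp.mapDomain Sum.swap d := by
  rw [swapD, Finsupp.equivMapDomain_eq_mapDomain]; rfl

def dX {m : ℕ} (d : (Fin m ⊕ Fin m) →₀ ℕ) : ℕ := ∑ i : Fin m, d (Sum.inl i)
def dY {m : ℕ} (d : (Fin m ⊕ Fin m) →₀ ℕ) : ℕ := ∑ i : Fin m, d (Sum.inr i)

@[simp] lemma dX_add (d e : (Fin m ⊕ Fin m) →₀ ℕ) : dX (d + e) = dX d + dX e := by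
  simp [dX, Finset.sum_add_distrib]
@[simp] lemma dY_add (d e : (Fin m ⊕ Fin m) →₀ ℕ) : dY (d + e) = dY d + dY e := by
  simp [dY, Finset.sum_add_distrib]
@[simp] lemma dX_swapD (d : (Fin m ⊕ Fin m) →₀ ℕ) : dX (swapD d) = dY d := rfl
@[simp] lemma dY_swapD (d : (Fin m ⊕ Fin m) →₀ ℕ) : dY (swapD d) = dX d := rfl
@[simp] lemma dX_zero : dX (0 : (Fin m ⊕ Fin m) →₀ ℕ) = 0 := by simp [dX]
@[simp] lemma dY_zero : dY (0 : (Fin m ⊕ Fin m) →₀ ℕ) = 0 := by simp [dY]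

lemma degSum (d : (Fin m ⊕ Fin m) →₀ ℕ) : (d.sum fun _ k => k) = dX d + dY d := by
  rw [Finsupp.sum_fintype _ _ (fun _ => rfl)]
  exact Fintype.sum_sum_type _

lemma dX_single_inl (i : Fin m) (k : ℕ) : dX (Finsupp.single (Sum.inl i) k) = k := by
  classical
  simp [dX, Finsupp.single_apply, Finset.sum_ite_eq']
lemma dY_single_inl (i : Fin m) (k : ℕ) : dY (Finsupp.single (Sum.inl i) k) = 0 := by
  simp [dY, Finsupp.single_apply]
lemma dX_single_inr (i : Fin m) (k : ℕ) : dX (Finsupp.single (Sum.inr i) k) = 0 := by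
  simp [dX, Finsupp.single_apply]
lemma dY_single_inr (i : Fin m) (k : ℕ) : dY (Finsupp.single (Sum.inr i) k) = k := by
  classical
  simp [dY, Finsupp.single_apply, Finset.sum_ite_eq']

lemma pos_dX {d : (Fin m ⊕ Fin m) →₀ ℕ} (h : 1 ≤ dX d) : ∃ i, 1 ≤ d (Sum.inl i) := by
  by_contra hc
  push_neg at hc
  have : dX d = 0 := Finset.sum_eq_zero fun i _ => Nat.lt_one_iff.mp (hc i)
  omega
lemma pos_dY {d : (Fin m ⊕ Fin m) →₀ ℕ} (h : 1 ≤ dY d) : ∃ i, 1 ≤ d (Sum.inr i) := by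
  by_contra hc
  push_neg at hc
  have : dY d = 0 := Finset.sum_eq_zero fun i _ => Nat.lt_one_iff.mp (hc i)
  omega
lemma dY_eq_zero {d : (Fin m ⊕ Fin m) →₀ ℕ} (h : dY d = 0) (i : Fin m) :
    d (Sum.inr i) = 0 := by
  by_contra hc
  have : 1 ≤ dY d := Finset.single_le_sum (f := fun i => d (Sum.inr i))
    (fun _ _ => Nat.zero_le _) (Finset.mem_univ i) |>.trans' (by omega)
  omega

lemma sA_eq_rename : sA F m = rename Sum.swap := by
  apply algHom_ext; intro s
  cases s <;> simp [sA, rename_X]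

lemma sA_monomial (d : (Fin m ⊕ Fin m) →₀ ℕ) (c : F) :
    sA F m (monomial d c) = monomial (swapD d) c := by
  rw [sA_eq_rename, rename_monomial, swapD_eq_mapDomain]

lemma coeff_sA (f : R F m) (e : (Fin m ⊕ Fin m) →₀ ℕ) :
    coeff e (sA F m f) = coeff (swapD e) f := by
  conv_lhs => rw [sA_eq_rename]
  have hinj : Function.Injective (Sum.swap : Fin m ⊕ Fin m → Fin m ⊕ Fin m) :=
    Function.LeftInverse.injective (g := Sum.swap) (fun s => Sum.swap_swap s)
  have h := coeff_rename_mapDomain (Sum.swap : Fin m ⊕ Fin m → Fin m ⊕ Fin m) hinj f (swapD e)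
  rw [← swapD_eq_mapDomain, swapD_swapD] at h
  exact h

lemma tA_monomial (a : Fˣ) (d : (Fin m ⊕ Fin m) →₀ ℕ) (c : F) :
    tA F m a (monomial d c) =
      monomial d (((a : F)) ^ dY d * ((a : F)⁻¹) ^ dX d * c) := by
  rw [tA, aeval_monomial]
  have h1 : (d.prod fun i k => (Sum.elim
      (fun i : Fin m => C ((a : F)⁻¹) * X (Sum.inl i))
      (fun i : Fin m => C ((a : F)) * (X (Sum.inr i) : R F m)) i) ^ k)
      = C (((a : F)) ^ dY d * ((a : F)⁻¹) ^ dX d) * monomial d 1 := by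
    rw [Finsupp.prod_fintype _ _ (fun i => pow_zero _)]
    have hX : ∏ s : Fin m ⊕ Fin m, (X s : R F m) ^ d s = monomial d 1 := by
      rw [← prod_X_pow_eq_monomial]
      exact (Finset.prod_subset (Finset.subset_univ _) (fun x _ hx => by
        rw [Finsupp.notMem_support_iff.mp hx, pow_zero])).symm
    calc ∏ s : Fin m ⊕ Fin m, (Sum.elim
        (fun i : Fin m => C ((a : F)⁻¹) * X (Sum.inl i))
        (fun i : Fin m => C ((a : F)) * (X (Sum.inr i) : R F m)) s) ^ d s
        = ∏ s : Fin m ⊕ Fin m, (C (Sum.elim (fun _ : Fin m => ((a : F)⁻¹))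
            (fun _ : Fin m => (a : F)) s) ^ d s * (X s : R F m) ^ d s) := by
          refine Finset.prod_congr rfl fun s _ => ?_
          cases s <;> simp only [Sum.elim_inl, Sum.elim_inr] <;> rw [mul_pow, ← C_pow]
      _ = C (∏ s : Fin m ⊕ Fin m, (Sum.elim (fun _ : Fin m => ((a : F)⁻¹))
            (fun _ : Fin m => (a : F)) s) ^ d s) * ∏ s : Fin m ⊕ Fin m, (X s : R F m) ^ d s := by
          rw [Finset.prod_mul_distrib, map_prod]
          simp only [C_pow]
      _ = C (((a : F)) ^ dY d * ((a : F)⁻¹) ^ dX d) * monomial d 1 := by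
          rw [hX]; congr 2
          rw [Fintype.prod_sum_type]
          simp only [Sum.elim_inl, Sum.elim_inr]
          rw [Finset.prod_pow_eq_pow_sum, Finset.prod_pow_eq_pow_sum, mul_comm]
          rfl
  rw [h1, algebraMap_eq, mul_left_comm, C_mul_monomial, mul_one, C_mul_monomial]

lemma coeff_tA (a : Fˣ) (f : R F m) (e : (Fin m ⊕ Fin m) →₀ ℕ) :
    coeff e (tA F m a f) = ((a : F)) ^ dY e * ((a : F)⁻¹) ^ dX e * coeff e f := by
  conv_lhs => rw [← support_sum_monomial_coeff f]
  rw [map_sum, coeff_sum]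
  simp only [tA_monomial, coeff_monomial]
  rw [Finset.sum_eq_single e]
  · simp
  · intro d _ hd
    simp [hd]
  · intro he
    have : coeff e f = 0 := by
      by_contra hc
      exact he (mem_support_iff.mpr hc)
    simp [this]
/-! ### admissibility -/

def Adm (F : Type*) [Field F] [Fintype F] {m : ℕ} (d : (Fin m ⊕ Fin m) →₀ ℕ) : Prop :=
  ∀ a : Fˣ, ((a : F)) ^ dX d = ((a : F)) ^ dY d

lemma adm_zero : Adm F (0 : (Fin m ⊕ Fin m) →₀ ℕ) := fun a => rfl

lemma adm_add {d e : (Fin m ⊕ Fin m) →₀ ℕ} (hd : Adm F d) (he : Adm F e) :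
    Adm F (d + e) := fun a => by
  rw [dX_add, dY_add, pow_add, pow_add, hd a, he a]

lemma adm_swapD {d : (Fin m ⊕ Fin m) →₀ ℕ} (hd : Adm F d) : Adm F (swapD d) :=
  fun a => (hd a).symm

lemma adm_cancel {d e : (Fin m ⊕ Fin m) →₀ ℕ} (hde : Adm F (d + e)) (he : Adm F e) :
    Adm F d := by
  intro a
  have ha : (a : F) ≠ 0 := Units.ne_zero a
  have h := hde a
  rw [dX_add, dY_add, pow_add, pow_add, he a] at h
  exact mul_right_cancel₀ (pow_ne_zero _ ha) h

lemma adm_factor {d : (Fin m ⊕ Fin m) →₀ ℕ} (hd : Adm F d) (a : Fˣ) :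
    ((a : F)) ^ dY d * ((a : F)⁻¹) ^ dX d = 1 := by
  rw [inv_pow, hd a, mul_inv_cancel₀ (pow_ne_zero _ (Units.ne_zero a))]

/-- the basic symmetrized pair of monomials -/
noncomputable def osP {m : ℕ} (F : Type*) [Field F] (d : (Fin m ⊕ Fin m) →₀ ℕ) : R F m :=
  monomial d 1 + monomial (swapD d) 1

lemma osP_swapD (d : (Fin m ⊕ Fin m) →₀ ℕ) : osP F (swapD d) = osP F d := by
  rw [osP, osP, swapD_swapD, add_comm]

lemma inv_osP {d : (Fin m ⊕ Fin m) →₀ ℕ} (hd : Adm F d) : Inv (osP F d) := by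
  constructor
  · rw [osP, map_add, sA_monomial, sA_monomial, swapD_swapD, add_comm]
  · intro a
    rw [osP, map_add, tA_monomial, tA_monomial]
    rw [adm_factor hd a]
    have h2 := adm_factor (adm_swapD (F := F) hd) a
    rw [dY_swapD, dX_swapD] at h2
    simp only [dY_swapD, dX_swapD]
    rw [h2]
    simp

lemma inv_monomial_diag {d : (Fin m ⊕ Fin m) →₀ ℕ} (hd : swapD d = d) :
    Inv (monomial d (1 : F)) := by
  have hXY : dX d = dY d := by
    rw [← dX_swapD d, hd]
  constructor
  · rw [sA_monomial, hd]
  · intro a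
    rw [tA_monomial]
    have : ((a : F)) ^ dY d * ((a : F)⁻¹) ^ dX d = 1 := by
      rw [hXY, inv_pow, mul_inv_cancel₀ (pow_ne_zero _ (Units.ne_zero a))]
    rw [this, one_mul]

/-- support of an invariant is admissible -/
lemma adm_of_inv {f : R F m} (hf : Inv f) {e : (Fin m ⊕ Fin m) →₀ ℕ}
    (he : coeff e f ≠ 0) : Adm F e := by
  intro a
  have h := congrArg (coeff e) (hf.2 a)
  rw [coeff_tA] at h
  have h2 : (((a : F)) ^ dY e * ((a : F)⁻¹) ^ dX e - 1) * coeff e f = 0 := by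
    rw [sub_mul, one_mul, h, sub_self]
  rcases mul_eq_zero.mp h2 with h3 | h3
  · have h4 : ((a : F)) ^ dY e * ((a : F)⁻¹) ^ dX e = 1 := by
      have := sub_eq_zero.mp h3; exact this
    have ha : (a : F) ≠ 0 := Units.ne_zero a
    have := congrArg (· * ((a : F)) ^ dX e) h4
    simp only [one_mul] at this
    rw [mul_assoc, inv_pow, inv_mul_cancel₀ (pow_ne_zero _ ha), mul_one] at this
    exact this.symm
  · exact absurd h3 he

lemma coeff_swapD_of_inv {f : R F m} (hf : Inv f) (e : (Fin m ⊕ Fin m) →₀ ℕ) :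
    coeff (swapD e) f = coeff e f := by
  conv_rhs => rw [← hf.1]
  rw [coeff_sA]

/-! ### product identities -/

lemma osP_mul_osP (d e : (Fin m ⊕ Fin m) →₀ ℕ) :
    osP F d * osP F e = osP F (d + e) + osP F (d + swapD e) := by
  simp only [osP, add_mul, mul_add, monomial_mul, one_mul, swapD_add, swapD_swapD]
  have h1 : swapD d + e = swapD (d + swapD e) := by rw [swapD_add, swapD_swapD]
  have h2 : swapD d + swapD e = swapD (d + e) := (swapD_add d e).symm
  rw [h1, h2]
  ring

lemma monomial_mul_osP (d e : (Fin m ⊕ Fin m) →₀ ℕ) (hd : swapD d = d) :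
    monomial d (1 : F) * osP F e = osP F (d + e) := by
  simp only [osP, mul_add, monomial_mul, one_mul, swapD_add, hd]

/-! ### degrees -/

lemma totalDegree_osP_le (d : (Fin m ⊕ Fin m) →₀ ℕ) :
    (osP F d).totalDegree ≤ dX d + dY d := by
  refine (totalDegree_add _ _).trans ?_
  apply max_le <;> refine (totalDegree_monomial_le _ _).trans ?_
  · rw [show (d.sum fun _ => id) = (d.sum fun _ k => k) from rfl, degSum]
  · rw [show ((swapD d).sum fun _ => id) = ((swapD d).sum fun _ k => k) from rfl,
      degSum, dX_swapD, dY_swapD]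
    omega

lemma totalDegree_monomial_le' (d : (Fin m ⊕ Fin m) →₀ ℕ) :
    (monomial d (1 : F)).totalDegree ≤ dX d + dY d := by
  refine (totalDegree_monomial_le _ _).trans ?_
  rw [show (d.sum fun _ => id) = (d.sum fun _ k => k) from rfl, degSum]

/-! ### small helpers -/

lemma add_self_zero (hchar : ringChar F = 2) (x : R F m) : x + x = 0 := by
  have : CharP F 2 := hchar ▸ ringChar.charP F
  exact CharTwo.add_self_eq_zero x

lemma pow_q1 (a : Fˣ) : ((a : F)) ^ (Fintype.card F - 1) = 1 :=
  FiniteField.pow_card_sub_one_eq_one _ (Units.ne_zero a)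

lemma q1_ge3 (h4 : 4 ≤ Fintype.card F) : 3 ≤ Fintype.card F - 1 := by omega

noncomputable def pairD (m : ℕ) (i : Fin m) : (Fin m ⊕ Fin m) →₀ ℕ :=
  Finsupp.single (Sum.inl i) 1 + Finsupp.single (Sum.inr i) 1

@[simp] lemma pairD_apply_inl (i j : Fin m) :
    pairD m i (Sum.inl j) = if i = j then 1 else 0 := by
  simp [pairD, Finsupp.single_apply]

@[simp] lemma pairD_apply_inr (i j : Fin m) :
    pairD m i (Sum.inr j) = if i = j then 1 else 0 := by
  simp [pairD, Finsupp.single_apply]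

lemma swapD_pairD (i : Fin m) : swapD (pairD m i) = pairD m i := by
  ext s; cases s <;> simp

lemma dX_pairD (i : Fin m) : dX (pairD m i) = 1 := by
  rw [pairD, dX_add, dX_single_inl, dX_single_inr]
lemma dY_pairD (i : Fin m) : dY (pairD m i) = 1 := by
  rw [pairD, dY_add, dY_single_inl, dY_single_inr]

lemma adm_pairD (i : Fin m) : Adm F (pairD m i) := by
  intro a; rw [dX_pairD, dY_pairD]

lemma sum_counts_le {d : (Fin m ⊕ Fin m) →₀ ℕ}
    (h : ∀ i, d (Sum.inl i) + d (Sum.inr i) ≤ 1) : dX d + dY d ≤ m := by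
  have : dX d + dY d = ∑ i : Fin m, (d (Sum.inl i) + d (Sum.inr i)) := by
    rw [dX, dY, ← Finset.sum_add_distrib]
  rw [this]
  calc ∑ i : Fin m, (d (Sum.inl i) + d (Sum.inr i)) ≤ ∑ _i : Fin m, 1 :=
        Finset.sum_le_sum fun i _ => h i
    _ = m := by simp

lemma decompose_le {d c : (Fin m ⊕ Fin m) →₀ ℕ} (h : ∀ s, c s ≤ d s) :
    (d - c) + c = d := by
  ext s
  rw [Finsupp.add_apply, Finsupp.tsub_apply]
  have := h s
  omega

lemma exists_sub (d : (Fin m ⊕ Fin m) →₀ ℕ) (k : ℕ) (hk : k ≤ dX d + dY d) :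
    ∃ c : (Fin m ⊕ Fin m) →₀ ℕ, (∀ s, c s ≤ d s) ∧ dX c + dY c = k := by
  induction k with
  | zero => exact ⟨0, fun s => Nat.zero_le _, by simp⟩
  | succ k ih =>
    obtain ⟨c, hc, hck⟩ := ih (by omega)
    have hne : ∃ s, c s < d s := by
      by_contra hcon
      push_neg at hcon
      have : c = d := by
        ext s; exact le_antisymm (hc s) (hcon s)
      rw [this] at hck
      omega
    obtain ⟨s, hs⟩ := hne
    refine ⟨c + Finsupp.single s 1, fun t => ?_, ?_⟩
    · rw [Finsupp.add_apply, Finsupp.single_apply]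
      have := hc t
      by_cases hts : s = t
      · subst hts
        rw [if_pos rfl]
        omega
      · simp only [if_neg hts]
        omega
    · cases s with
      | inl i => rw [dX_add, dY_add, dX_single_inl, dY_single_inl]; omega
      | inr i => rw [dX_add, dY_add, dX_single_inr, dY_single_inr]; omega

lemma prod_monomial {ι : Type*} (s : Finset ι) (g : ι → ((Fin m ⊕ Fin m) →₀ ℕ)) :
    (∏ i ∈ s, (monomial (g i) (1 : F))) = monomial (∑ i ∈ s, g i) 1 := by
  classical
  induction s using Finset.induction with
  | empty => simp [monomial_eq]
  | insert _ _ hx ih =>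
    rw [Finset.prod_insert hx, Finset.sum_insert hx, ih, monomial_mul, one_mul]

lemma diag_eq_sum_pairs {d : (Fin m ⊕ Fin m) →₀ ℕ} (hd : swapD d = d) :
    ∑ i : Fin m, (d (Sum.inl i)) • pairD m i = d := by
  ext s
  rw [Finsupp.finset_sum_apply]
  cases s with
  | inl j =>
    rw [Finset.sum_eq_single j]
    · simp
    · intro i _ hij
      simp [Finsupp.smul_apply, hij]
    · intro h; exact absurd (Finset.mem_univ j) h
  | inr j =>
    rw [Finset.sum_eq_single j]
    · have : d (Sum.inl j) = d (Sum.inr j) := by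
        conv_rhs => rw [← hd]
        simp
      simp [this]
    · intro i _ hij
      simp [Finsupp.smul_apply, hij]
    · intro h; exact absurd (Finset.mem_univ j) h

/-! ### the generating set and the adjoin -/

def Gens (F : Type*) [Field F] [Fintype F] [DecidableEq F] (m D : ℕ) : Set (R F m) :=
  {g : R F m | Inv g ∧ g.totalDegree ≤ D}

lemma osP_basic_mem {D : ℕ} {d : (Fin m ⊕ Fin m) →₀ ℕ} (hadm : Adm F d)
    (hdeg : dX d + dY d ≤ D) : osP F d ∈ Algebra.adjoin F (Gens F m D) :=
  Algebra.subset_adjoin ⟨inv_osP hadm, (totalDegree_osP_le d).trans hdeg⟩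

lemma xy_mem {D : ℕ} (hD : 2 ≤ D) (i : Fin m) :
    monomial (pairD m i) (1 : F) ∈ Algebra.adjoin F (Gens F m D) := by
  refine Algebra.subset_adjoin ⟨inv_monomial_diag (swapD_pairD i), ?_⟩
  refine (totalDegree_monomial_le' _).trans ?_
  rw [dX_pairD, dY_pairD]
  omega

lemma diag_mem {D : ℕ} (hD : 2 ≤ D) {d : (Fin m ⊕ Fin m) →₀ ℕ} (hd : swapD d = d) :
    monomial d (1 : F) ∈ Algebra.adjoin F (Gens F m D) := by
  have key : monomial d (1 : F)
      = ∏ i : Fin m, (monomial (pairD m i) (1 : F)) ^ (d (Sum.inl i)) := by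
    have h1 : ∀ i : Fin m, (monomial (pairD m i) (1 : F)) ^ (d (Sum.inl i))
        = monomial ((d (Sum.inl i)) • pairD m i) 1 := by
      intro i
      rw [monomial_pow, one_pow]
    simp only [h1]
    rw [prod_monomial, diag_eq_sum_pairs hd]
  rw [key]
  exact prod_mem fun i _ => pow_mem (xy_mem hD i) _

/-! ### the main upper bound induction -/

lemma osP_mem (hchar : ringChar F = 2) (h4 : 4 ≤ Fintype.card F)
    (n : ℕ) (d : (Fin m ⊕ Fin m) →₀ ℕ) (hdeg : dX d + dY d = n) (hadm : Adm F d) :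
    osP F d ∈ Algebra.adjoin F (Gens F m (max (Fintype.card F - 1) m)) := by
  induction n using Nat.strong_induction_on generalizing d with
  | _ n IH =>
  set q1 := Fintype.card F - 1 with hq1def
  have hq3 : 3 ≤ q1 := q1_ge3 h4
  set M := max q1 m with hMdef
  set A := Algebra.adjoin F (Gens F m M) with hA
  have hMq : q1 ≤ M := le_max_left _ _
  have hMm : m ≤ M := le_max_right _ _
  by_cases hn : n ≤ M
  · exact osP_basic_mem hadm (by omega)
  push_neg at hn
  have hq1n : q1 < n := lt_of_le_of_lt hMq hn
  have hmn : m < n := lt_of_le_of_lt hMm hn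
  have h2M : 2 ≤ M := le_trans (by omega) hMq
  have hq1M : q1 ≤ M := hMq
  -- overlap case handler
  have keyO : ∀ d' : (Fin m ⊕ Fin m) →₀ ℕ, dX d' + dY d' = n → Adm F d' →
      (∃ i, 1 ≤ d' (Sum.inl i) ∧ 1 ≤ d' (Sum.inr i)) → osP F d' ∈ A := by
    rintro d' hdeg' hadm' ⟨i, hi1, hi2⟩
    have hle : ∀ s, pairD m i s ≤ d' s := by
      intro s
      cases s with
      | inl j =>
        rw [pairD_apply_inl]
        by_cases hij : i = j
        · subst hij; rw [if_pos rfl]; omega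
        · simp [hij]
      | inr j =>
        rw [pairD_apply_inr]
        by_cases hij : i = j
        · subst hij; rw [if_pos rfl]; omega
        · simp [hij]
    have hdec := decompose_le hle
    set r := d' - pairD m i with hr
    have hadmr : Adm F r := adm_cancel (hdec.symm ▸ hadm') (adm_pairD i)
    have hdegr : dX r + dY r + 2 = n := by
      have h1 := congrArg dX hdec
      have h2 := congrArg dY hdec
      rw [dX_add, dX_pairD] at h1
      rw [dY_add, dY_pairD] at h2
      omega
    have hrA : osP F r ∈ A := IH (n - 2) (by omega) r (by omega) hadmr
    have heq : osP F d' = monomial (pairD m i) 1 * osP F r := by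
      rw [monomial_mul_osP _ _ (swapD_pairD i), ← hdec, add_comm]
    rw [heq]
    exact mul_mem (xy_mem h2M i) hrA
  -- mixed with a big x entry
  have keyMixBody : ∀ e : (Fin m ⊕ Fin m) →₀ ℕ, dX e + dY e = n → Adm F e →
      (∃ i, 2 ≤ e (Sum.inl i) ∧ e (Sum.inr i) = 0) → 1 ≤ dY e → osP F e ∈ A := by
    rintro e hdeg' hadm' ⟨i, hi2, hi0⟩ hy
    obtain ⟨j, hj⟩ := pos_dY hy
    have hij : j ≠ i := by
      intro h; rw [h, hi0] at hj; omega
    set u : (Fin m ⊕ Fin m) →₀ ℕ :=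
      Finsupp.single (Sum.inl i) 1 + Finsupp.single (Sum.inr j) 1 with hu
    have hu_inl : ∀ t, u (Sum.inl t) = if i = t then 1 else 0 := by
      intro t; rw [hu]; simp [Finsupp.single_apply]
    have hu_inr : ∀ t, u (Sum.inr t) = if j = t then 1 else 0 := by
      intro t; rw [hu]; simp [Finsupp.single_apply]
    have hadmu : Adm F u := by
      intro a
      rw [hu, dX_add, dY_add, dX_single_inl, dX_single_inr, dY_single_inl, dY_single_inr]
    have hdXu : dX u = 1 := by
      rw [hu, dX_add, dX_single_inl, dX_single_inr]
    have hdYu : dY u = 1 := by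
      rw [hu, dY_add, dY_single_inl, dY_single_inr]
    have hle : ∀ s, u s ≤ e s := by
      intro s
      cases s with
      | inl t =>
        rw [hu_inl t]
        by_cases hit : i = t
        · subst hit; rw [if_pos rfl]; omega
        · simp [hit]
      | inr t =>
        rw [hu_inr t]
        by_cases hjt : j = t
        · subst hjt; rw [if_pos rfl]; omega
        · simp [hjt]
    have hdec := decompose_le hle
    set r := e - u with hrdef
    have hadmr : Adm F r := adm_cancel (hdec.symm ▸ hadm') hadmu
    have hdegr : dX r + dY r + 2 = n := by
      have h1 := congrArg dX hdec
      have h2 := congrArg dY hdec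
      rw [dX_add, hdXu] at h1
      rw [dY_add, hdYu] at h2
      omega
    have heq : osP F e = osP F r * osP F u + osP F (r + swapD u) := by
      rw [osP_mul_osP, ← hdec, add_assoc, add_self_zero hchar, add_zero]
    rw [heq]
    refine add_mem (mul_mem (IH (n - 2) (by omega) r (by omega) hadmr)
      (osP_basic_mem hadmu (by omega))) ?_
    refine keyO _ ?_ (adm_add hadmr (adm_swapD hadmu)) ⟨i, ?_, ?_⟩
    · rw [dX_add, dY_add, dX_swapD, dY_swapD, hdXu, hdYu]; omega
    · have : r (Sum.inl i) = e (Sum.inl i) - u (Sum.inl i) := by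
        rw [hrdef, Finsupp.tsub_apply]
      rw [Finsupp.add_apply, this, hu_inl i, if_pos rfl, swapD_apply_inl, hu_inr i,
        if_neg hij]
      omega
    · rw [Finsupp.add_apply, swapD_apply_inr, hu_inl i, if_pos rfl]
      omega
  -- mixed case
  have keyMix : ∀ e : (Fin m ⊕ Fin m) →₀ ℕ, dX e + dY e = n → Adm F e →
      1 ≤ dX e → 1 ≤ dY e → osP F e ∈ A := by
    intro e hdeg' hadm' hx hy
    have hbig : ¬(∀ i, e (Sum.inl i) + e (Sum.inr i) ≤ 1) := by
      intro hcon
      have := sum_counts_le hcon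
      omega
    push_neg at hbig
    obtain ⟨i, hi⟩ := hbig
    by_cases hov : 1 ≤ e (Sum.inl i) ∧ 1 ≤ e (Sum.inr i)
    · exact keyO e hdeg' hadm' ⟨i, hov⟩
    · rw [Decidable.not_and_iff_or_not] at hov
      rcases hov with h0 | h0 <;> push_neg at h0 <;>
        rw [Nat.lt_one_iff] at h0
      · -- e (inl i) = 0, so e (inr i) ≥ 2 : use swap
        rw [← osP_swapD]
        refine keyMixBody (swapD e) (by rw [dX_swapD, dY_swapD]; omega)
          (adm_swapD hadm') ⟨i, ?_, ?_⟩ (by rw [dY_swapD]; omega)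
        · rw [swapD_apply_inl]; omega
        · rw [swapD_apply_inr]; omega
      · exact keyMixBody e hdeg' hadm' ⟨i, by omega, h0⟩ hy
  -- pure case
  have keyPure : ∀ e : (Fin m ⊕ Fin m) →₀ ℕ, dX e + dY e = n → Adm F e →
      dY e = 0 → osP F e ∈ A := by
    intro e hdeg' hadm' hY
    obtain ⟨c, hc, hcdeg⟩ := exists_sub e q1 (by omega)
    have hdYc : dY c = 0 := by
      have : ∀ i, c (Sum.inr i) = 0 := by
        intro i
        have h1 := hc (Sum.inr i)
        have h2 := dY_eq_zero hY i
        omega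
      exact Finset.sum_eq_zero fun i _ => this i
    have hdXc : dX c = q1 := by omega
    have hadmc : Adm F c := by
      intro a
      rw [hdXc, hdYc, hq1def, pow_q1, pow_zero]
    have hdec := decompose_le hc
    set r := e - c with hrdef
    have hadmr : Adm F r := adm_cancel (hdec.symm ▸ hadm') hadmc
    have hdY2 : dY r + dY c = dY e := by
      have h2 := congrArg dY hdec
      rw [dY_add] at h2
      exact h2
    have hdegr : dX r + dY r + q1 = n := by
      have h1 := congrArg dX hdec
      rw [dX_add] at h1
      omega
    have heq : osP F e = osP F r * osP F c + osP F (r + swapD c) := by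
      rw [osP_mul_osP, ← hdec, add_assoc, add_self_zero hchar, add_zero]
    rw [heq]
    refine add_mem (mul_mem (IH (n - q1) (by omega) r (by omega) hadmr)
      (osP_basic_mem hadmc (le_of_eq hcdeg |>.trans hq1M))) ?_
    refine keyMix _ ?_ (adm_add hadmr (adm_swapD hadmc)) ?_ ?_
    · rw [dX_add, dY_add, dX_swapD, dY_swapD]; omega
    · rw [dX_add, dX_swapD, hdYc]
      have hdYr : dY r = 0 := by omega
      omega
    · rw [dY_add, dY_swapD, hdXc]
      omega
  -- dispatch
  by_cases hY : dY d = 0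
  · exact keyPure d hdeg hadm hY
  by_cases hX : dX d = 0
  · rw [← osP_swapD]
    exact keyPure (swapD d) (by rw [dX_swapD, dY_swapD]; omega) (adm_swapD hadm)
      (by rw [dY_swapD]; omega)
  · exact keyMix d hdeg hadm (by omega) (by omega)

/-! ### every invariant lies in the adjoin -/

lemma add_self_zeroF (hchar : ringChar F = 2) (x : F) : x + x = 0 := by
  have : CharP F 2 := hchar ▸ ringChar.charP F
  exact CharTwo.add_self_eq_zero x

lemma inv_mem_aux (hchar : ringChar F = 2) (h4 : 4 ≤ Fintype.card F) :
    ∀ (k : ℕ) (f : R F m), f.support.card ≤ k → Inv f →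
      f ∈ Algebra.adjoin F (Gens F m (max (Fintype.card F - 1) m)) := by
  intro k
  induction k with
  | zero =>
    intro f hf _
    have : f.support = ∅ := Finset.card_eq_zero.mp (Nat.le_zero.mp hf)
    rw [support_eq_empty.mp this]
    exact zero_mem _
  | succ k IH =>
    intro f hcard hf
    by_cases h0 : f = 0
    · rw [h0]; exact zero_mem _
    obtain ⟨d, hd⟩ := support_nonempty.mpr h0
    have hcd : coeff d f ≠ 0 := mem_support_iff.mp hd
    have hadm : Adm F d := adm_of_inv hf hcd
    have h2M : 2 ≤ max (Fintype.card F - 1) m := by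
      have := q1_ge3 h4
      have := le_max_left (Fintype.card F - 1) m
      omega
    -- the piece to subtract
    by_cases hdiag : swapD d = d
    · set g := C (coeff d f) * monomial d (1 : F) with hg
      have hgmem : g ∈ Algebra.adjoin F (Gens F m (max (Fintype.card F - 1) m)) := by
        exact mul_mem (Subalgebra.algebraMap_mem _ _) (diag_mem h2M hdiag)
      have hginv : Inv g := inv_C_mul _ (inv_monomial_diag hdiag)
      have hcoeffg : ∀ e, coeff e g = if d = e then coeff d f else 0 := by
        intro e
        rw [hg, coeff_C_mul, coeff_monomial]
        by_cases h : d = e <;> simp [h]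
      have hsupp : (f + g).support ⊆ f.support.erase d := by
        intro e he
        rw [mem_support_iff] at he
        rw [coeff_add, hcoeffg] at he
        by_cases hde : d = e
        · subst hde
          rw [if_pos rfl, add_self_zeroF hchar] at he
          exact absurd rfl he
        · rw [if_neg hde, add_zero] at he
          exact Finset.mem_erase.mpr ⟨Ne.symm hde, mem_support_iff.mpr he⟩
      have hmem2 := IH (f + g) (by
        have h1 := Finset.card_le_card hsupp
        have h2 : (f.support.erase d).card < f.support.card :=
          Finset.card_erase_lt_of_mem hd
        omega) (inv_add hf hginv)
      have : f = (f + g) + g := by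
        rw [add_assoc, add_self_zero hchar, add_zero]
      rw [this]
      exact add_mem hmem2 hgmem
    · set g := C (coeff d f) * osP F d with hg
      have hgmem : g ∈ Algebra.adjoin F (Gens F m (max (Fintype.card F - 1) m)) :=
        mul_mem (Subalgebra.algebraMap_mem _ _)
          (osP_mem hchar h4 (dX d + dY d) d rfl hadm)
      have hginv : Inv g := inv_C_mul _ (inv_osP hadm)
      have hcoeffg : ∀ e, coeff e g =
          (if d = e then coeff d f else 0) + (if swapD d = e then coeff d f else 0) := by
        intro e
        rw [hg, osP, mul_add, coeff_add, coeff_C_mul, coeff_C_mul,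
          coeff_monomial, coeff_monomial]
        by_cases h1 : d = e <;> by_cases h2 : swapD d = e <;> simp [h1, h2]
      have hsymm : coeff (swapD d) f = coeff d f :=
        coeff_swapD_of_inv hf d
      have hsupp : (f + g).support ⊆ f.support.erase d := by
        intro e he
        rw [mem_support_iff] at he
        rw [coeff_add, hcoeffg] at he
        by_cases hde : d = e
        · subst hde
          rw [if_pos rfl, if_neg hdiag, add_zero, add_self_zeroF hchar] at he
          exact absurd rfl he
        · by_cases hse : swapD d = e
          · subst hse
            rw [if_neg hde, if_pos rfl, zero_add, hsymm, add_self_zeroF hchar] at he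
            exact absurd rfl he
          · rw [if_neg hde, if_neg hse, add_zero, add_zero] at he
            exact Finset.mem_erase.mpr ⟨Ne.symm hde, mem_support_iff.mpr he⟩
      have hmem2 := IH (f + g) (by
        have h1 := Finset.card_le_card hsupp
        have h2 : (f.support.erase d).card < f.support.card :=
          Finset.card_erase_lt_of_mem hd
        omega) (inv_add hf hginv)
      have : f = (f + g) + g := by
        rw [add_assoc, add_self_zero hchar, add_zero]
      rw [this]
      exact add_mem hmem2 hgmem

lemma inv_mem (hchar : ringChar F = 2) (h4 : 4 ≤ Fintype.card F) (f : R F m)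
    (hf : Inv f) :
    f ∈ Algebra.adjoin F (Gens F m (max (Fintype.card F - 1) m)) :=
  inv_mem_aux hchar h4 f.support.card f le_rfl hf

/-! ### lower bound part 1 : q - 1 ≤ β -/

/-- the balanced subalgebra -/
def Bal (F : Type*) [Field F] [Fintype F] [DecidableEq F] (m : ℕ) :
    Subalgebra F (R F m) where
  carrier := {g : R F m | ∀ e ∈ g.support, dX e = dY e}
  mul_mem' := by
    intro p q hp hq e he
    have := support_mul p q he
    rw [Finset.mem_add] at this
    obtain ⟨u, hu, v, hv, rfl⟩ := this
    rw [dX_add, dY_add, hp u hu, hq v hv]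
  one_mem' := by
    intro e he
    have h1 : coeff e (1 : R F m) ≠ 0 := mem_support_iff.mp he
    rw [coeff_one] at h1
    have : (0 : (Fin m ⊕ Fin m) →₀ ℕ) = e := by
      by_contra hc
      rw [if_neg hc] at h1
      exact h1 rfl
    rw [← this]
    simp
  add_mem' := by
    intro p q hp hq e he
    have := Finsupp.support_add he
    rw [Finset.mem_union] at this
    rcases this with h | h
    · exact hp e h
    · exact hq e h
  zero_mem' := by
    intro e he
    simp at he
  algebraMap_mem' := by
    intro c e he
    have h1 : coeff e (C c : R F m) ≠ 0 := mem_support_iff.mp he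
    rw [coeff_C] at h1
    have : (0 : (Fin m ⊕ Fin m) →₀ ℕ) = e := by
      by_contra hc
      rw [if_neg hc] at h1
      exact h1 rfl
    rw [← this]
    simp

lemma adm_small_eq (h4 : 4 ≤ Fintype.card F) {e : (Fin m ⊕ Fin m) →₀ ℕ}
    (hadm : Adm F e) (hsum : dX e + dY e ≤ Fintype.card F - 2) : dX e = dY e := by
  obtain ⟨g0, hg0⟩ := IsCyclic.exists_generator (α := Fˣ)
  have horder : orderOf g0 = Fintype.card F - 1 := by
    rw [orderOf_eq_card_of_forall_mem_zpowers hg0, Nat.card_eq_fintype_card, Fintype.card_units]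
  have h1 : g0 ^ dX e = g0 ^ dY e := by
    have := hadm g0
    ext
    rw [Units.val_pow_eq_pow_val, Units.val_pow_eq_pow_val]
    exact this
  have h2 : dX e ≡ dY e [MOD Fintype.card F - 1] := by
    rw [← horder]
    exact pow_eq_pow_iff_modEq.mp h1
  have h3 : dX e % (Fintype.card F - 1) = dX e :=
    Nat.mod_eq_of_lt (by omega)
  have h4' : dY e % (Fintype.card F - 1) = dY e :=
    Nat.mod_eq_of_lt (by omega)
  rw [Nat.ModEq, h3, h4'] at h2
  exact h2

lemma gens_sub_bal (h4 : 4 ≤ Fintype.card F) {D : ℕ} (hD : D ≤ Fintype.card F - 2) :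
    Gens F m D ⊆ (Bal F m : Set (R F m)) := by
  rintro g ⟨hinv, hdeg⟩ e he
  have hadm : Adm F e := adm_of_inv hinv (mem_support_iff.mp he)
  have hsum : dX e + dY e ≤ D := by
    rw [← degSum]
    exact (le_totalDegree he).trans hdeg
  exact adm_small_eq h4 hadm (by omega)

lemma lb1 (h4 : 4 ≤ Fintype.card F) (hm : 0 < m) {D : ℕ}
    (hD : D ≤ Fintype.card F - 2)
    (H : osP F (Finsupp.single (Sum.inl (⟨0, hm⟩ : Fin m)) (Fintype.card F - 1))
      ∈ Algebra.adjoin F (Gens F m D)) : False := by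
  set i0 : Fin m := ⟨0, hm⟩
  set e0 : (Fin m ⊕ Fin m) →₀ ℕ := Finsupp.single (Sum.inl i0) (Fintype.card F - 1)
    with he0
  have hq3 : 3 ≤ Fintype.card F - 1 := q1_ge3 h4
  have hbal : osP F e0 ∈ Bal F m := by
    have := Algebra.adjoin_le (R := F)
      (show Gens F m D ⊆ (Bal F m : Set (R F m)) from gens_sub_bal h4 hD)
    exact this H
  have hne : swapD e0 ≠ e0 := by
    intro hc
    have := congrArg (fun d => d (Sum.inl i0)) hc
    simp only [swapD_apply_inl, he0] at this
    rw [Finsupp.single_apply, Finsupp.single_apply] at this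
    simp at this
    omega
  have hmem : e0 ∈ (osP F e0).support := by
    rw [mem_support_iff, osP, coeff_add, coeff_monomial, coeff_monomial,
      if_pos rfl, if_neg hne, add_zero]
    exact one_ne_zero
  have := hbal e0 hmem
  rw [he0, dX_single_inl, dY_single_inl] at this
  omega

/-! ### lower bound part 2 : multilinear words -/

def FullML {m : ℕ} (e : (Fin m ⊕ Fin m) →₀ ℕ) : Prop :=
  ∀ i : Fin m, e (Sum.inl i) + e (Sum.inr i) = 1

noncomputable def word {m : ℕ} (b : Fin m → Bool) : (Fin m ⊕ Fin m) →₀ ℕ :=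
  ∑ i : Fin m, Finsupp.single (if b i then Sum.inr i else Sum.inl i) 1

lemma word_apply_inl (b : Fin m → Bool) (j : Fin m) :
    word b (Sum.inl j) = if b j then 0 else 1 := by
  rw [word, Finsupp.finset_sum_apply]
  rw [Finset.sum_eq_single j]
  · cases hb : b j <;> simp [hb, Finsupp.single_apply]
  · intro i _ hij
    cases hb : b i <;> simp [hb, Finsupp.single_apply, Sum.inl.injEq, hij]
  · intro h; exact absurd (Finset.mem_univ j) h

lemma word_apply_inr (b : Fin m → Bool) (j : Fin m) :
    word b (Sum.inr j) = if b j then 1 else 0 := by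
  rw [word, Finsupp.finset_sum_apply]
  rw [Finset.sum_eq_single j]
  · cases hb : b j <;> simp [hb, Finsupp.single_apply]
  · intro i _ hij
    cases hb : b i <;> simp [hb, Finsupp.single_apply, Sum.inr.injEq, hij]
  · intro h; exact absurd (Finset.mem_univ j) h

lemma fullML_word (b : Fin m → Bool) : FullML (word b) := by
  intro i
  rw [word_apply_inl, word_apply_inr]
  cases hb : b i <;> simp

lemma fullML_iff_word (e : (Fin m ⊕ Fin m) →₀ ℕ) :
    FullML e ↔ ∃ b : Fin m → Bool, e = word b := by
  constructor
  · intro he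
    refine ⟨fun i => decide (e (Sum.inr i) = 1), ?_⟩
    ext s
    cases s with
    | inl j =>
      rw [word_apply_inl]
      have := he j
      by_cases h : e (Sum.inr j) = 1 <;> simp [h] <;> omega
    | inr j =>
      rw [word_apply_inr]
      have := he j
      by_cases h : e (Sum.inr j) = 1 <;> simp [h] <;> omega
  · rintro ⟨b, rfl⟩
    exact fullML_word b

lemma fullML_degSum {e : (Fin m ⊕ Fin m) →₀ ℕ} (he : FullML e) : dX e + dY e = m := by
  have : dX e + dY e = ∑ i : Fin m, (e (Sum.inl i) + e (Sum.inr i)) := by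
    rw [dX, dY, ← Finset.sum_add_distrib]
  rw [this, Finset.sum_congr rfl fun i _ => he i]
  simp

lemma count_add_swapD (u v : (Fin m ⊕ Fin m) →₀ ℕ) (i : Fin m) :
    (u + swapD v) (Sum.inl i) + (u + swapD v) (Sum.inr i)
      = (u + v) (Sum.inl i) + (u + v) (Sum.inr i) := by
  simp only [Finsupp.add_apply, swapD_apply_inl, swapD_apply_inr]
  omega

lemma fullML_add_swapD_iff (u v : (Fin m ⊕ Fin m) →₀ ℕ) :
    FullML (u + swapD v) ↔ FullML (u + v) := by
  constructor <;> intro h i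
  · rw [← count_add_swapD]; exact h i
  · rw [count_add_swapD]; exact h i

/-! the class relation -/

def Rel1 (F : Type*) [Field F] [Fintype F] {m : ℕ}
    (w w' : (Fin m ⊕ Fin m) →₀ ℕ) : Prop :=
  ∃ a b : (Fin m ⊕ Fin m) →₀ ℕ, Adm F a ∧ Adm F b ∧ w = a + b ∧ w' = a + swapD b

def Cls (F : Type*) [Field F] [Fintype F] {m : ℕ}
    (w0 w : (Fin m ⊕ Fin m) →₀ ℕ) : Prop :=
  Relation.ReflTransGen (Rel1 F) w0 w

lemma rel1_symm {w w' : (Fin m ⊕ Fin m) →₀ ℕ} (h : Rel1 F w w') : Rel1 F w' w := by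
  obtain ⟨a, b, ha, hb, h1, h2⟩ := h
  exact ⟨a, swapD b, ha, adm_swapD hb, h2, by rw [swapD_swapD, ← h1]⟩

lemma cls_iff_of_rel1 {w0 w w' : (Fin m ⊕ Fin m) →₀ ℕ} (h : Rel1 F w w') :
    Cls F w0 w ↔ Cls F w0 w' :=
  ⟨fun hc => hc.tail h, fun hc => hc.tail (rel1_symm h)⟩

/-! the test functional -/

noncomputable def TS (F : Type*) [Field F] [Fintype F] (m : ℕ)
    (w0 : (Fin m ⊕ Fin m) →₀ ℕ) (i0 : Fin m) : Finset ((Fin m ⊕ Fin m) →₀ ℕ) :=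
  @Finset.filter _ (fun e => Cls F w0 e ∧ e (Sum.inl i0) = 1)
    (fun _ => Classical.propDecidable _)
    ((Finset.univ : Finset (Fin m → Bool)).image word)

lemma mem_TS {w0 e : (Fin m ⊕ Fin m) →₀ ℕ} {i0 : Fin m} :
    e ∈ TS F m w0 i0 ↔ FullML e ∧ Cls F w0 e ∧ e (Sum.inl i0) = 1 := by
  letI : DecidablePred (fun e : (Fin m ⊕ Fin m) →₀ ℕ =>
      Cls F w0 e ∧ e (Sum.inl i0) = 1) := fun _ => Classical.propDecidable _
  rw [TS, Finset.mem_filter, Finset.mem_image, fullML_iff_word]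
  constructor
  · rintro ⟨⟨b, _, rfl⟩, h⟩
    exact ⟨⟨b, rfl⟩, h⟩
  · rintro ⟨⟨b, rfl⟩, h⟩
    exact ⟨⟨b, Finset.mem_univ b, rfl⟩, h⟩

noncomputable def lam (F : Type*) [Field F] [Fintype F] (m : ℕ)
    (w0 : (Fin m ⊕ Fin m) →₀ ℕ) (i0 : Fin m) (f : R F m) : F :=
  ∑ e ∈ TS F m w0 i0, coeff e f

variable {w0 : (Fin m ⊕ Fin m) →₀ ℕ} {i0 : Fin m}

lemma lam_add (f g : R F m) :
    lam F m w0 i0 (f + g) = lam F m w0 i0 f + lam F m w0 i0 g := by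
  rw [lam, lam, lam, ← Finset.sum_add_distrib]
  exact Finset.sum_congr rfl fun e _ => coeff_add e f g

lemma lam_sum {ι : Type*} (s : Finset ι) (g : ι → R F m) :
    lam F m w0 i0 (∑ x ∈ s, g x) = ∑ x ∈ s, lam F m w0 i0 (g x) := by
  rw [lam]
  simp only [coeff_sum]
  exact Finset.sum_comm

lemma lam_C_mul (c : F) (f : R F m) :
    lam F m w0 i0 (C c * f) = c * lam F m w0 i0 f := by
  rw [lam, lam, Finset.mul_sum]
  exact Finset.sum_congr rfl fun e _ => coeff_C_mul e c f

lemma lam_monomial (d : (Fin m ⊕ Fin m) →₀ ℕ) (c : F) :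
    lam F m w0 i0 (monomial d c) = if d ∈ TS F m w0 i0 then c else 0 := by
  rw [lam]
  simp only [coeff_monomial]
  exact Finset.sum_ite_eq (TS F m w0 i0) d (fun _ => c)

lemma lam_low (hm : 0 < m) {f : R F m} (hdeg : f.totalDegree < m) :
    lam F m w0 i0 f = 0 := by
  rw [lam]
  refine Finset.sum_eq_zero fun e he => ?_
  have hml := (mem_TS.mp he).1
  refine coeff_eq_zero_of_totalDegree_lt ?_
  have hsum : (∑ i ∈ e.support, e i) = dX e + dY e := by
    rw [← degSum]; rfl
  rw [hsum, fullML_degSum hml]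
  exact hdeg

lemma lam_eq_sum_support (f : R F m) :
    lam F m w0 i0 f = ∑ v ∈ f.support, if v ∈ TS F m w0 i0 then coeff v f else 0 := by
  rw [lam, Finset.sum_ite_mem, ← Finset.inter_comm (TS F m w0 i0) f.support,
    ← Finset.sum_ite_mem]
  refine Finset.sum_congr rfl fun e _ => ?_
  by_cases h : e ∈ f.support
  · rw [if_pos h]
  · rw [if_neg h, MvPolynomial.notMem_support_iff.mp h]

lemma zero_not_mem_TS (hm : 0 < m) : (0 : (Fin m ⊕ Fin m) →₀ ℕ) ∉ TS F m w0 i0 := by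
  intro h
  have := (mem_TS.mp h).1 ⟨0, hm⟩
  simp at this

lemma TS_swap_right {u v : (Fin m ⊕ Fin m) →₀ ℕ} (hu : Adm F u) (hv : Adm F v)
    (hcov : 1 ≤ u (Sum.inl i0) + u (Sum.inr i0)) :
    (u + swapD v ∈ TS F m w0 i0) ↔ (u + v ∈ TS F m w0 i0) := by
  rw [mem_TS, mem_TS, fullML_add_swapD_iff]
  by_cases hml : FullML (u + v)
  · simp only [hml, true_and]
    have hrel : Rel1 F (u + v) (u + swapD v) := ⟨u, v, hu, hv, rfl, rfl⟩
    rw [cls_iff_of_rel1 (w0 := w0) hrel]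
    have hc := hml i0
    simp only [Finsupp.add_apply] at hc
    have : (u + swapD v) (Sum.inl i0) = (u + v) (Sum.inl i0) := by
      simp only [Finsupp.add_apply, swapD_apply_inl]
      omega
    rw [this]
  · simp [hml]

lemma TS_swap_left {u v : (Fin m ⊕ Fin m) →₀ ℕ} (hu : Adm F u) (hv : Adm F v)
    (hcov : u (Sum.inl i0) + u (Sum.inr i0) = 0) :
    (swapD u + v ∈ TS F m w0 i0) ↔ (u + v ∈ TS F m w0 i0) := by
  rw [mem_TS, mem_TS]
  have hml : FullML (swapD u + v) ↔ FullML (u + v) := by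
    rw [add_comm (swapD u) v, fullML_add_swapD_iff, add_comm]
  rw [hml]
  by_cases h : FullML (u + v)
  · simp only [h, true_and]
    have hrel : Rel1 F (u + v) (swapD u + v) :=
      ⟨v, u, hv, hu, add_comm u v, add_comm (swapD u) v⟩
    rw [cls_iff_of_rel1 (w0 := w0) hrel]
    have : (swapD u + v) (Sum.inl i0) = (u + v) (Sum.inl i0) := by
      simp only [Finsupp.add_apply, swapD_apply_inl]
      omega
    rw [this]
  · simp [h]

lemma lam_mul_expand (p q : R F m) :
    lam F m w0 i0 (p * q) = ∑ u ∈ p.support, ∑ v ∈ q.support,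
      (if (u + v) ∈ TS F m w0 i0 then coeff u p * coeff v q else 0) := by
  conv_lhs => rw [← support_sum_monomial_coeff p, ← support_sum_monomial_coeff q]
  rw [Finset.sum_mul_sum, lam_sum]
  refine Finset.sum_congr rfl fun u _ => ?_
  rw [lam_sum]
  refine Finset.sum_congr rfl fun v _ => ?_
  rw [monomial_mul, lam_monomial]

lemma lam_mul (hchar : ringChar F = 2) (hm : 0 < m) {p q : R F m}
    (hp : Inv p) (hq : Inv q) :
    lam F m w0 i0 (p * q)
      = coeff 0 p * lam F m w0 i0 q + lam F m w0 i0 p * coeff 0 q := by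
  classical
  rw [lam_mul_expand, ← Finset.sum_product']
  set f : (((Fin m ⊕ Fin m) →₀ ℕ) × ((Fin m ⊕ Fin m) →₀ ℕ)) → F :=
    fun x => if (x.1 + x.2) ∈ TS F m w0 i0 then coeff x.1 p * coeff x.2 q else 0
    with hfdef
  set s := p.support ×ˢ q.support with hsdef
  rw [← Finset.sum_filter_add_sum_filter_not s (fun x => x.1 = 0) f,
    ← Finset.sum_filter_add_sum_filter_not
      (s.filter (fun x => ¬ x.1 = 0)) (fun x => x.2 = 0) f]
  have hA1 : ∑ x ∈ s.filter (fun x => x.1 = 0), f x = coeff 0 p * lam F m w0 i0 q := by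
    have hset : s.filter (fun x => x.1 = 0)
        = (p.support.filter (fun u => u = 0)) ×ˢ q.support := by
      ext x
      simp only [Finset.mem_filter, Finset.mem_product, hsdef]
      tauto
    rw [hset, Finset.sum_product, Finset.filter_eq']
    by_cases h0 : 0 ∈ p.support
    · rw [if_pos h0, Finset.sum_singleton, lam_eq_sum_support, Finset.mul_sum]
      refine Finset.sum_congr rfl fun v _ => ?_
      simp only [hfdef, zero_add]
      by_cases hv : v ∈ TS F m w0 i0 <;> simp [hv]
    · rw [if_neg h0, Finset.sum_empty, MvPolynomial.notMem_support_iff.mp h0, zero_mul]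
  have hA2 : ∑ x ∈ (s.filter (fun x => ¬ x.1 = 0)).filter (fun x => x.2 = 0), f x
      = lam F m w0 i0 p * coeff 0 q := by
    have hset : (s.filter (fun x => ¬ x.1 = 0)).filter (fun x => x.2 = 0)
        = (p.support.filter (fun u => ¬ u = 0)) ×ˢ (q.support.filter (fun v => v = 0)) := by
      ext x
      simp only [Finset.mem_filter, Finset.mem_product, hsdef]
      tauto
    rw [hset, Finset.sum_product, Finset.filter_eq']
    by_cases h0 : 0 ∈ q.support
    · rw [if_pos h0]
      have hsum : ∀ u ∈ p.support.filter (fun u => ¬ u = 0),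
          (∑ v ∈ {(0 : (Fin m ⊕ Fin m) →₀ ℕ)}, f (u, v))
            = (if u ∈ TS F m w0 i0 then coeff u p * coeff 0 q else 0) := by
        intro u _
        rw [Finset.sum_singleton]
        simp only [hfdef, add_zero]
      rw [Finset.sum_congr rfl hsum]
      have hext : ∑ u ∈ p.support.filter (fun u => ¬ u = 0),
          (if u ∈ TS F m w0 i0 then coeff u p * coeff 0 q else 0)
          = ∑ u ∈ p.support,
          (if u ∈ TS F m w0 i0 then coeff u p * coeff 0 q else 0) := by
        refine Finset.sum_subset (Finset.filter_subset _ _) ?_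
        intro u hu hnu
        simp only [Finset.mem_filter, not_and, not_not] at hnu
        have : u = 0 := hnu hu
        subst this
        rw [if_neg (zero_not_mem_TS hm)]
      rw [hext, lam_eq_sum_support, Finset.sum_mul]
      refine Finset.sum_congr rfl fun u _ => ?_
      by_cases hu : u ∈ TS F m w0 i0 <;> simp [hu, mul_assoc]
    · rw [if_neg h0]
      simp only [Finset.sum_empty, Finset.sum_const_zero]
      rw [MvPolynomial.notMem_support_iff.mp h0, mul_zero]
  have hA3 : ∑ x ∈ ((s.filter (fun x => ¬ x.1 = 0)).filter (fun x => ¬ x.2 = 0)), f x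
      = 0 := by
    set s3 := (s.filter (fun x => ¬ x.1 = 0)).filter (fun x => ¬ x.2 = 0) with hs3
    have hmem3 : ∀ x ∈ s3, x.1 ∈ p.support ∧ x.2 ∈ q.support ∧ x.1 ≠ 0 ∧ x.2 ≠ 0 := by
      intro x hx
      simp only [hs3, Finset.mem_filter, Finset.mem_product, hsdef] at hx
      tauto
    refine Finset.sum_involution
      (fun x _ => if 1 ≤ x.1 (Sum.inl i0) + x.1 (Sum.inr i0)
        then (x.1, swapD x.2) else (swapD x.1, x.2)) ?_ ?_ ?_ ?_
    · -- cancellation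
      intro x hx
      obtain ⟨hxp, hxq, hx1, hx2⟩ := hmem3 x hx
      have hadmu : Adm F x.1 := adm_of_inv hp (mem_support_iff.mp hxp)
      have hadmv : Adm F x.2 := adm_of_inv hq (mem_support_iff.mp hxq)
      by_cases hcov : 1 ≤ x.1 (Sum.inl i0) + x.1 (Sum.inr i0)
      · rw [if_pos hcov]
        have : f (x.1, swapD x.2) = f x := by
          simp only [hfdef]
          rw [coeff_swapD_of_inv hq]
          simp only [TS_swap_right hadmu hadmv hcov]
        rw [this, add_self_zeroF hchar]
      · rw [if_neg hcov]
        have : f (swapD x.1, x.2) = f x := by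
          simp only [hfdef]
          rw [coeff_swapD_of_inv hp]
          simp only [TS_swap_left (w0 := w0) (i0 := i0) hadmu hadmv (by omega)]
        rw [this, add_self_zeroF hchar]
    · -- no fixed points
      intro x hx hfx
      obtain ⟨hxp, hxq, hx1, hx2⟩ := hmem3 x hx
      have hT : (x.1 + x.2) ∈ TS F m w0 i0 := by
        by_contra hc
        rw [hfdef] at hfx
        simp only [if_neg hc] at hfx
        exact hfx rfl
      have hml : FullML (x.1 + x.2) := (mem_TS.mp hT).1
      by_cases hcov : 1 ≤ x.1 (Sum.inl i0) + x.1 (Sum.inr i0)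
      · rw [if_pos hcov]
        intro hcontra
        have h2 : swapD x.2 = x.2 := congrArg Prod.snd hcontra
        apply hx2
        ext t
        have key : ∀ i : Fin m, x.2 (Sum.inl i) = 0 ∧ x.2 (Sum.inr i) = 0 := by
          intro i
          have hcount := hml i
          simp only [Finsupp.add_apply] at hcount
          have := congrArg (fun d => d (Sum.inl i)) h2
          simp only [swapD_apply_inl] at this
          omega
        cases t with
        | inl j => simpa using (key j).1
        | inr j => simpa using (key j).2
      · rw [if_neg hcov]
        intro hcontra
        have h2 : swapD x.1 = x.1 := congrArg Prod.fst hcontra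
        apply hx1
        ext t
        have key : ∀ i : Fin m, x.1 (Sum.inl i) = 0 ∧ x.1 (Sum.inr i) = 0 := by
          intro i
          have hcount := hml i
          simp only [Finsupp.add_apply] at hcount
          have := congrArg (fun d => d (Sum.inl i)) h2
          simp only [swapD_apply_inl] at this
          omega
        cases t with
        | inl j => simpa using (key j).1
        | inr j => simpa using (key j).2
    · -- maps into the set
      intro x hx
      obtain ⟨hxp, hxq, hx1, hx2⟩ := hmem3 x hx
      by_cases hcov : 1 ≤ x.1 (Sum.inl i0) + x.1 (Sum.inr i0)
      · rw [if_pos hcov]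
        simp only [hs3, Finset.mem_filter, Finset.mem_product, hsdef]
        refine ⟨⟨⟨hxp, ?_⟩, hx1⟩, ?_⟩
        · rw [mem_support_iff, coeff_swapD_of_inv hq]
          exact mem_support_iff.mp hxq
        · intro hc
          exact hx2 (swapD_eq_zero_iff.mp hc)
      · rw [if_neg hcov]
        simp only [hs3, Finset.mem_filter, Finset.mem_product, hsdef]
        refine ⟨⟨⟨?_, hxq⟩, ?_⟩, hx2⟩
        · rw [mem_support_iff, coeff_swapD_of_inv hp]
          exact mem_support_iff.mp hxp
        · intro hc
          exact hx1 (swapD_eq_zero_iff.mp hc)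
    · -- involutive
      intro x hx
      by_cases hcov : 1 ≤ x.1 (Sum.inl i0) + x.1 (Sum.inr i0)
      · rw [if_pos hcov]
        simp only
        rw [if_pos hcov, swapD_swapD]
      · rw [if_neg hcov]
        simp only
        have : ¬ 1 ≤ (swapD x.1) (Sum.inl i0) + (swapD x.1) (Sum.inr i0) := by
          rw [swapD_apply_inl, swapD_apply_inr]
          omega
        rw [if_neg this, swapD_swapD]
  rw [hA1, hA2, hA3, add_zero]

/-! ### assembling the degree-m witness -/

lemma pow_mod_eq (a : Fˣ) {s t : ℕ} (h : s ≡ t [MOD Fintype.card F - 1]) :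
    ((a : F)) ^ s = ((a : F)) ^ t := by
  have hdvd : orderOf a ∣ Fintype.card F - 1 := by
    rw [← Fintype.card_units (α := F)]
    exact orderOf_dvd_card
  have h' : s ≡ t [MOD orderOf a] := Nat.ModEq.of_dvd hdvd h
  have : a ^ s = a ^ t := pow_eq_pow_iff_modEq.mpr h'
  have := congrArg (Units.val) this
  rwa [Units.val_pow_eq_pow_val, Units.val_pow_eq_pow_val] at this

lemma exists_k (hchar : ringChar F = 2) (h4 : 4 ≤ Fintype.card F) :
    ∃ k, k < Fintype.card F - 1
      ∧ (2 * k) ≡ m [MOD Fintype.card F - 1] := by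
  set q := Fintype.card F with hq
  have heven : q % 2 = 0 := FiniteField.even_card_of_char_two hchar
  have hq4 : 4 ≤ q := h4
  refine ⟨(m * (q / 2)) % (q - 1), Nat.mod_lt _ (by omega), ?_⟩
  have hstep1 : 2 * ((m * (q / 2)) % (q - 1)) ≡ 2 * (m * (q / 2)) [MOD q - 1] :=
    Nat.ModEq.mul_left 2 (Nat.mod_modEq _ _)
  have hq2 : 2 * (q / 2) = q := by omega
  have hstep2 : 2 * (m * (q / 2)) = m * q := by
    rw [mul_left_comm, hq2]
  have hstep3 : m * q ≡ m * 1 [MOD q - 1] := by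
    refine Nat.ModEq.mul_left m ?_
    have : (1 : ℕ) ≡ q [MOD q - 1] := (Nat.modEq_iff_dvd' (by omega)).mpr dvd_rfl
    exact this.symm
  calc 2 * ((m * (q / 2)) % (q - 1)) ≡ 2 * (m * (q / 2)) [MOD q - 1] := hstep1
    _ = m * q := hstep2
    _ ≡ m * 1 [MOD q - 1] := hstep3
    _ = m := by rw [mul_one]

lemma dX_word (b : Fin m → Bool) :
    dX (word b) = (Finset.univ.filter (fun i => b i = false)).card := by
  rw [dX, Finset.card_filter]
  refine Finset.sum_congr rfl fun i _ => ?_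
  rw [word_apply_inl]
  cases hb : b i <;> simp [hb]

lemma lam_osP_self (hm : 0 < m) {w0 : (Fin m ⊕ Fin m) →₀ ℕ}
    (hml : FullML w0) (hadm : Adm F w0) :
    lam F m w0 ⟨0, hm⟩ (osP F w0) = 1 := by
  set i0 : Fin m := ⟨0, hm⟩
  have hmls : FullML (swapD w0) := by
    intro i
    rw [swapD_apply_inl, swapD_apply_inr]
    have := hml i
    omega
  have hcls1 : Cls F w0 w0 := Relation.ReflTransGen.refl
  have hcls2 : Cls F w0 (swapD w0) := by
    refine Relation.ReflTransGen.single ?_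
    exact ⟨0, w0, adm_zero, hadm, (zero_add w0).symm, (zero_add _).symm⟩
  have hcount := hml i0
  rw [osP, lam_add, lam_monomial, lam_monomial]
  by_cases hcov : w0 (Sum.inl i0) = 1
  · rw [if_pos (mem_TS.mpr ⟨hml, hcls1, hcov⟩), if_neg, add_zero]
    intro hc
    have := (mem_TS.mp hc).2.2
    rw [swapD_apply_inl] at this
    omega
  · rw [if_neg, if_pos (mem_TS.mpr ⟨hmls, hcls2, ?_⟩), zero_add]
    · rw [swapD_apply_inl]
      omega
    · intro hc
      exact hcov ((mem_TS.mp hc).2.2)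

lemma lam_adjoin_zero (hchar : ringChar F = 2) (hm : 0 < m)
    {w0 : (Fin m ⊕ Fin m) →₀ ℕ} {i0 : Fin m} {D : ℕ} (hD : D < m) {x : R F m}
    (hx : x ∈ Algebra.adjoin F (Gens F m D)) : lam F m w0 i0 x = 0 := by
  have hx' : x ∈ Submodule.span F ((Submonoid.closure (Gens F m D) : Submonoid (R F m)) : Set (R F m)) := by
    have := Algebra.adjoin_eq_span (R := F) (s := Gens F m D)
    rw [← this]
    exact hx
  refine Submodule.span_induction
    (p := fun y _ => lam F m w0 i0 y = 0) ?_ ?_ ?_ ?_ hx'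
  · -- elements of the monoid closure
    intro y hy
    have : Inv y ∧ lam F m w0 i0 y = 0 := by
      refine Submonoid.closure_induction
        (motive := fun z _ => Inv z ∧ lam F m w0 i0 z = 0) ?_ ?_ ?_ hy
      · rintro g ⟨hginv, hgdeg⟩
        exact ⟨hginv, lam_low hm (lt_of_le_of_lt hgdeg hD)⟩
      · refine ⟨inv_one, lam_low hm ?_⟩
        rw [totalDegree_one]
        omega
      · rintro z w _ _ ⟨hzinv, hz0⟩ ⟨hwinv, hw0⟩
        refine ⟨inv_mul hzinv hwinv, ?_⟩
        rw [lam_mul hchar hm hzinv hwinv, hz0, hw0, mul_zero, zero_mul, add_zero]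
    exact this.2
  · exact lam_low hm (by rw [totalDegree_zero]; omega)
  · intro y z _ _ hy hz
    rw [lam_add, hy, hz, add_zero]
  · intro c y _ hy
    rw [smul_eq_C_mul, lam_C_mul, hy, mul_zero]

lemma lb2 (hchar : ringChar F = 2) (h4 : 4 ≤ Fintype.card F) (hm : 0 < m)
    (hq1m : Fintype.card F - 1 ≤ m) {D : ℕ} (hD : D < m)
    (H : ∀ f : R F m, Inv f → f ∈ Algebra.adjoin F (Gens F m D)) : False := by
  obtain ⟨k, hk, hkm⟩ := exists_k (F := F) (m := m) hchar h4
  have hq3 : 3 ≤ Fintype.card F - 1 := q1_ge3 h4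
  have hkm' : k < m := lt_of_lt_of_le hk hq1m
  set b0 : Fin m → Bool := fun i => decide (k ≤ (i : ℕ)) with hb0
  set w0 := word b0 with hw0
  have hml : FullML w0 := fullML_word b0
  have hdX : dX w0 = k := by
    rw [hw0, dX_word]
    have hset : Finset.univ.filter (fun i => b0 i = false)
        = Finset.Iio (⟨k, hkm'⟩ : Fin m) := by
      ext i
      simp only [Finset.mem_filter, Finset.mem_univ, true_and, Finset.mem_Iio, hb0,
        decide_eq_false_iff_not, not_le, Fin.lt_def]
    rw [hset, Fin.card_Iio]
  have hdeg : dX w0 + dY w0 = m := fullML_degSum hml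
  have hadm : Adm F w0 := by
    intro a
    refine pow_mod_eq a ?_
    rw [hdX]
    have h1 : dY w0 = m - k := by omega
    rw [h1]
    have h2 : (m - k) + k ≡ k + k [MOD Fintype.card F - 1] := by
      have : (m - k) + k = m := by omega
      rw [this]
      have := hkm.symm
      rwa [two_mul] at this
    exact (Nat.ModEq.add_right_cancel' k h2).symm
  have hinv : Inv (osP F w0) := inv_osP hadm
  have h0 := lam_adjoin_zero (w0 := w0) (i0 := ⟨0, hm⟩) hchar hm hD (H _ hinv)
  have h1 := lam_osP_self hm hml hadm
  rw [h0] at h1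
  exact zero_ne_one h1
end NN

/-- The Noether number of `O₂⁺(F_q)` (char 2, `q ≥ 4`) on `m` copies of the
standard representation equals `max (q-1) m`: `max (q-1) m` is the least `d`
such that every invariant of `F_q[x₁,…,x_m,y₁,…,y_m]` under the swap
`σ : x_i ↔ y_i` and the scalings `τ_a : x_i ↦ a⁻¹x_i, y_i ↦ a·y_i` lies in the
subalgebra generated by invariants of (total) degree at most `d`.
Variables: `x_i = X (Sum.inl i)`, `y_i = X (Sum.inr i)`. -/
theorem noether_number (F : Type*) [Field F] [Fintype F] [DecidableEq F]
    (hchar : ringChar F = 2) (h4 : 4 ≤ Fintype.card F) (m : ℕ) (hm : 0 < m) :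
    IsLeast
      {d : ℕ |
        ∀ f : MvPolynomial (Fin m ⊕ Fin m) F,
          (aeval (R := F) (Sum.elim
                (fun i : Fin m => (X (Sum.inr i) : MvPolynomial (Fin m ⊕ Fin m) F))
                (fun i : Fin m => X (Sum.inl i))) f = f ∧
              ∀ a : Fˣ,
                aeval (R := F) (Sum.elim
                    (fun i : Fin m => C ((a : F)⁻¹) * X (Sum.inl i))
                    (fun i : Fin m =>
                      C ((a : F)) * (X (Sum.inr i) : MvPolynomial (Fin m ⊕ Fin m) F))) f = f) →
            f ∈ Algebra.adjoin F
              {g : MvPolynomial (Fin m ⊕ Fin m) F |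
                (aeval (R := F) (Sum.elim
                      (fun i : Fin m => (X (Sum.inr i) : MvPolynomial (Fin m ⊕ Fin m) F))
                      (fun i : Fin m => X (Sum.inl i))) g = g ∧
                    ∀ a : Fˣ,
                      aeval (R := F) (Sum.elim
                          (fun i : Fin m => C ((a : F)⁻¹) * X (Sum.inl i))
                          (fun i : Fin m =>
                            C ((a : F)) * (X (Sum.inr i) : MvPolynomial (Fin m ⊕ Fin m) F))) g
                        = g) ∧
                  g.totalDegree ≤ d}}
      (max (Fintype.card F - 1) m) := by
  constructor
  · -- the Noether bound holds
    intro f hf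
    exact NN.inv_mem hchar h4 f hf
  · -- it is least
    intro D hD
    have hq1D : Fintype.card F - 1 ≤ D := by
      by_contra hc
      push_neg at hc
      have hadm : NN.Adm F (Finsupp.single (Sum.inl (⟨0, hm⟩ : Fin m))
          (Fintype.card F - 1)) := by
        intro a
        rw [NN.dX_single_inl, NN.dY_single_inl, NN.pow_q1, pow_zero]
      have hinv := NN.inv_osP (m := m) hadm
      refine NN.lb1 h4 hm (D := D) (by omega) ?_
      exact hD _ hinv
    refine max_le hq1D ?_
    by_cases hmq : m ≤ Fintype.card F - 1
    · omega
    · push_neg at hmq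
      by_contra hc
      push_neg at hc
      exact NN.lb2 hchar h4 hm (by omega) hc (fun f hf => hD f hf)
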